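/- Let each fᵢ: ℝ^d → ℝ have H-Lipschitz Hessian and let M ≥ H. Define φᵢ(x) = fᵢ(wᵢ) + ⟨∇fᵢ(wᵢ), x − wᵢ⟩ + (1/2)⟨∇²fᵢ(wᵢ)(x − wᵢ), x − wᵢ⟩, and let x⁺ minimize (1/n)∑ᵢ[φᵢ(x) + (M/6)‖x − wᵢ‖³]. Then f(x⁺) ≤ min over x of [f(x) + ((M+H)/6)·(1/n)∑ᵢ ‖x − wᵢ‖³], where f = (1/n)∑ᵢ fᵢ. -/

import Mathlib

open scoped RealInnerProductSpace

set_option maxHeartbeats 1000000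
set_option synthInstance.maxHeartbeats 200000


lemma one_dim (g g1 g2 : ℝ → ℝ) (L : ℝ) (hL : 0 ≤ L)
    (hg : ∀ t, HasDerivAt g (g1 t) t)
    (hg1 : ∀ t, HasDerivAt g1 (g2 t) t)
    (hg2c : Continuous g2)
    (hlip : ∀ t ∈ Set.Icc (0:ℝ) 1, |g2 t - g2 0| ≤ L * t) :
    |g 1 - g 0 - g1 0 - g2 0 / 2| ≤ L / 6 := by
  set p : ℝ → ℝ := fun t => g1 t - g1 0 - t * g2 0 with hp
  have hpc : Continuous p := by
    have hc : Continuous g1 := continuous_iff_continuousAt.2 fun t => (hg1 t).differentiableAt.continuousAt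
    continuity
  have hpderiv : ∀ t, HasDerivAt p (g2 t - g2 0) t := by
    intro t
    simpa [hp, Pi.sub_def] using ((hg1 t).sub_const (g1 0)).sub ((hasDerivAt_id t).mul_const (g2 0))
  -- bound |p t| ≤ L * t^2 / 2 on [0,1]
  have hpbound : ∀ t ∈ Set.Icc (0:ℝ) 1, |p t| ≤ L * t ^ 2 / 2 := by
    intro t ht
    have hint : IntervalIntegrable (fun s => g2 s - g2 0) MeasureTheory.volume 0 t :=
      (hg2c.sub continuous_const).intervalIntegrable 0 t
    have heq : ∫ s in (0:ℝ)..t, (g2 s - g2 0) = p t - p 0 :=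
      intervalIntegral.integral_eq_sub_of_hasDerivAt (fun s _ => hpderiv s) hint
    have hp0 : p 0 = 0 := by simp [hp]
    rw [hp0, sub_zero] at heq
    rw [← heq]
    calc |∫ s in (0:ℝ)..t, (g2 s - g2 0)| ≤ ∫ s in (0:ℝ)..t, |g2 s - g2 0| :=
          by simpa only [Real.norm_eq_abs] using
            intervalIntegral.norm_integral_le_integral_norm (f := fun s => g2 s - g2 0) ht.1
      _ ≤ ∫ s in (0:ℝ)..t, L * s := by
          apply intervalIntegral.integral_mono_on ht.1
          · exact ((hg2c.sub continuous_const).abs).intervalIntegrable 0 t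
          · exact (continuous_const.mul continuous_id).intervalIntegrable 0 t
          · intro s hs
            exact hlip s ⟨hs.1, hs.2.trans ht.2⟩
      _ = L * t ^ 2 / 2 := by
          rw [intervalIntegral.integral_const_mul, integral_id]; ring
  -- now q
  set q : ℝ → ℝ := fun t => g t - g 0 - t * g1 0 - t ^ 2 / 2 * g2 0 with hq
  have hqderiv : ∀ t, HasDerivAt q (p t) t := by
    intro t
    have h1 : HasDerivAt (fun t : ℝ => t ^ 2 / 2 * g2 0) (t * g2 0) t := by
      simpa using ((hasDerivAt_pow 2 t).div_const 2).mul_const (g2 0)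
    simpa [hp, hq, Pi.sub_def] using (((hg t).sub_const (g 0)).sub ((hasDerivAt_id t).mul_const (g1 0))).sub h1
  have heq2 : ∫ s in (0:ℝ)..1, p s = q 1 - q 0 :=
    intervalIntegral.integral_eq_sub_of_hasDerivAt (fun s _ => hqderiv s)
      (hpc.intervalIntegrable 0 1)
  have hq0 : q 0 = 0 := by simp [hq]
  have hq1 : q 1 = g 1 - g 0 - g1 0 - g2 0 / 2 := by simp [hq]; ring
  rw [← hq1, ← sub_zero (q 1), ← hq0, ← heq2]
  calc |∫ s in (0:ℝ)..1, p s| ≤ ∫ s in (0:ℝ)..1, |p s| :=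
        by simpa only [Real.norm_eq_abs] using
          intervalIntegral.norm_integral_le_integral_norm (f := p) zero_le_one
    _ ≤ ∫ s in (0:ℝ)..1, L * s ^ 2 / 2 := by
        apply intervalIntegral.integral_mono_on zero_le_one
        · exact hpc.abs.intervalIntegrable 0 1
        · exact (by fun_prop : Continuous fun s : ℝ => L * s ^ 2 / 2).intervalIntegrable 0 1
        · exact hpbound
    _ = L / 6 := by
        simp only [mul_div_assoc]
        rw [intervalIntegral.integral_const_mul, intervalIntegral.integral_div,
          integral_pow]
        norm_num
        ring


lemma taylor_bound {d : ℕ} (f : EuclideanSpace ℝ (Fin d) → ℝ) (H : ℝ) (hH : 0 ≤ H)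
    (hf : ContDiff ℝ 2 f)
    (hLip : ∀ x y : EuclideanSpace ℝ (Fin d),
      ‖fderiv ℝ (gradient f) x - fderiv ℝ (gradient f) y‖ ≤ H * ‖x - y‖)
    (w x : EuclideanSpace ℝ (Fin d)) :
    |f x - (f w + ⟪gradient f w, x - w⟫
      + (1 / 2) * ⟪fderiv ℝ (gradient f) w (x - w), x - w⟫)| ≤ H / 6 * ‖x - w‖ ^ 3 := by
  set v : EuclideanSpace ℝ (Fin d) := x - w with hv
  set A : EuclideanSpace ℝ (Fin d) → (EuclideanSpace ℝ (Fin d) →L[ℝ] EuclideanSpace ℝ (Fin d)) := fderiv ℝ (gradient f) with hA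
  set γ : ℝ → EuclideanSpace ℝ (Fin d) := fun t => w + t • v with hγ
  have hγd : ∀ t : ℝ, HasDerivAt γ v t := by
    intro t
    simpa [hγ] using ((hasDerivAt_id t).smul_const v).const_add w
  -- gradient is C¹
  have hgradCD : ContDiff ℝ 1 (gradient f) := by
    have h1 : ContDiff ℝ 1 (fderiv ℝ f) := hf.fderiv_right (by norm_num)
    exact ((InnerProductSpace.toDual ℝ (EuclideanSpace ℝ (Fin d))).symm.contDiff).comp h1
  have hgradD : Differentiable ℝ (gradient f) := hgradCD.differentiable one_ne_zero
  have hfd : Differentiable ℝ f := hf.differentiable (by norm_num)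
  set g : ℝ → ℝ := fun t => f (γ t) with hg
  set g1 : ℝ → ℝ := fun t => ⟪v, gradient f (γ t)⟫ with hg1
  set g2 : ℝ → ℝ := fun t => ⟪v, A (γ t) v⟫ with hg2
  have key : ∀ y : EuclideanSpace ℝ (Fin d), fderiv ℝ f y v = ⟪v, gradient f y⟫ := by
    intro y
    rw [real_inner_comm]
    exact (InnerProductSpace.toDual_symm_apply).symm
  have hgd : ∀ t, HasDerivAt g (g1 t) t := by
    intro t
    have := ((hfd (γ t)).hasFDerivAt).comp_hasDerivAt t (hγd t)
    simpa [hg, hg1, Function.comp_def] using this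
  have hg1d : ∀ t, HasDerivAt g1 (g2 t) t := by
    intro t
    have h1 : HasDerivAt (fun s => gradient f (γ s)) (A (γ t) v) t :=
      ((hgradD (γ t)).hasFDerivAt).comp_hasDerivAt t (hγd t)
    have h2 := (innerSL ℝ v).hasFDerivAt.comp_hasDerivAt t h1
    simpa [hg1, hg2, Function.comp_def] using h2
  have hAlip : LipschitzWith ⟨H, hH⟩ A := by
    apply LipschitzWith.of_dist_le_mul
    intro a b
    rw [dist_eq_norm, dist_eq_norm]
    exact_mod_cast hLip a b
  have hg2c : Continuous g2 := by
    have h1 : Continuous fun t => A (γ t) := by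
      apply hAlip.continuous.comp
      continuity
    have h2 : Continuous fun t => A (γ t) v :=
      (ContinuousLinearMap.apply ℝ (EuclideanSpace ℝ (Fin d)) v).continuous.comp h1
    exact continuous_const.inner h2
  have hlip2 : ∀ t ∈ Set.Icc (0:ℝ) 1, |g2 t - g2 0| ≤ (H * ‖v‖ ^ 3) * t := by
    intro t ht
    have hγ0 : γ 0 = w := by simp [hγ]
    have e1 : g2 t - g2 0 = ⟪v, (A (γ t) - A w) v⟫ := by
      simp [hg2, hγ0, inner_sub_right, ContinuousLinearMap.sub_apply]
    rw [e1]
    calc |⟪v, (A (γ t) - A w) v⟫| ≤ ‖v‖ * ‖(A (γ t) - A w) v‖ := abs_real_inner_le_norm _ _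
      _ ≤ ‖v‖ * (‖A (γ t) - A w‖ * ‖v‖) := by
          gcongr; exact ContinuousLinearMap.le_opNorm _ _
      _ ≤ ‖v‖ * ((H * ‖γ t - w‖) * ‖v‖) := by
          gcongr
          exact hLip (γ t) w
      _ = H * ‖γ t - w‖ * ‖v‖ ^ 2 := by ring
      _ = (H * ‖v‖ ^ 3) * t := by
          have : γ t - w = t • v := by simp [hγ]
          rw [this, norm_smul, Real.norm_eq_abs, abs_of_nonneg ht.1]
          ring
  have hmain := one_dim g g1 g2 (H * ‖v‖ ^ 3) (by positivity) hgd hg1d hg2c hlip2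
  have e0 : g 0 = f w := by simp [hg, hγ]
  have e1 : g 1 = f x := by simp [hg, hγ, hv]
  have e2 : g1 0 = ⟪gradient f w, x - w⟫ := by
    simp [hg1, hγ, hv, real_inner_comm, mul_comm]
  have e3 : g2 0 = ⟪fderiv ℝ (gradient f) w (x - w), x - w⟫ := by
    simp [hg2, hγ, hA, hv, real_inner_comm, mul_comm]
  rw [e0, e1, e2, e3] at hmain
  calc |f x - (f w + ⟪gradient f w, x - w⟫
        + (1 / 2) * ⟪fderiv ℝ (gradient f) w (x - w), x - w⟫)|
      = |f x - f w - ⟪gradient f w, x - w⟫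
        - ⟪fderiv ℝ (gradient f) w (x - w), x - w⟫ / 2| := by ring_nf
    _ ≤ H * ‖v‖ ^ 3 / 6 := hmain
    _ = H / 6 * ‖x - w‖ ^ 3 := by rw [hv]; ring

theorem cubic_model_min_upper_bound
    (d n : ℕ) (hn : 0 < n)
    (f : Fin n → EuclideanSpace ℝ (Fin d) → ℝ)
    (H M : ℝ) (hH : 0 ≤ H) (hM : H ≤ M)
    (hf : ∀ i, ContDiff ℝ 2 (f i))
    (hLip : ∀ i, ∀ x y : EuclideanSpace ℝ (Fin d),
      ‖fderiv ℝ (gradient (f i)) x - fderiv ℝ (gradient (f i)) y‖ ≤ H * ‖x - y‖)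
    (w : Fin n → EuclideanSpace ℝ (Fin d))
    (φ : Fin n → EuclideanSpace ℝ (Fin d) → ℝ)
    (hφ : ∀ i x, φ i x = f i (w i) + ⟪gradient (f i) (w i), x - w i⟫
      + (1 / 2) * ⟪fderiv ℝ (gradient (f i)) (w i) (x - w i), x - w i⟫)
    (xplus : EuclideanSpace ℝ (Fin d))
    (hxplus : ∀ y : EuclideanSpace ℝ (Fin d),
      (n : ℝ)⁻¹ * ∑ i, (φ i xplus + M / 6 * ‖xplus - w i‖ ^ 3)
        ≤ (n : ℝ)⁻¹ * ∑ i, (φ i y + M / 6 * ‖y - w i‖ ^ 3)) :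
    ∀ y : EuclideanSpace ℝ (Fin d),
      (n : ℝ)⁻¹ * ∑ i, f i xplus
        ≤ (n : ℝ)⁻¹ * ∑ i, f i y + (M + H) / 6 * ((n : ℝ)⁻¹ * ∑ i, ‖y - w i‖ ^ 3) := by
  intro y
  have htay : ∀ i x, |f i x - φ i x| ≤ H / 6 * ‖x - w i‖ ^ 3 := by
    intro i x
    rw [hφ i x]
    exact taylor_bound (f i) H hH (hf i) (hLip i) (w i) x
  have hninv : (0:ℝ) ≤ (n : ℝ)⁻¹ := by positivity
  have step1 : (n : ℝ)⁻¹ * ∑ i, f i xplus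
      ≤ (n : ℝ)⁻¹ * ∑ i, (φ i xplus + M / 6 * ‖xplus - w i‖ ^ 3) := by
    apply mul_le_mul_of_nonneg_left _ hninv
    apply Finset.sum_le_sum
    intro i _
    have h := (abs_le.mp (htay i xplus)).2
    have hMH : H / 6 * ‖xplus - w i‖ ^ 3 ≤ M / 6 * ‖xplus - w i‖ ^ 3 := by
      gcongr
    linarith
  have step3 : (n : ℝ)⁻¹ * ∑ i, (φ i y + M / 6 * ‖y - w i‖ ^ 3)
      ≤ (n : ℝ)⁻¹ * ∑ i, (f i y + (M + H) / 6 * ‖y - w i‖ ^ 3) := by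
    apply mul_le_mul_of_nonneg_left _ hninv
    apply Finset.sum_le_sum
    intro i _
    have h := (abs_le.mp (htay i y)).1
    nlinarith [pow_nonneg (norm_nonneg (y - w i)) 3]
  have hfin : (n : ℝ)⁻¹ * ∑ i, (f i y + (M + H) / 6 * ‖y - w i‖ ^ 3)
      = (n : ℝ)⁻¹ * ∑ i, f i y + (M + H) / 6 * ((n : ℝ)⁻¹ * ∑ i, ‖y - w i‖ ^ 3) := by
    rw [Finset.sum_add_distrib, mul_add, ← Finset.mul_sum]
    ring
  calc (n : ℝ)⁻¹ * ∑ i, f i xplus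
      ≤ (n : ℝ)⁻¹ * ∑ i, (φ i xplus + M / 6 * ‖xplus - w i‖ ^ 3) := step1
    _ ≤ (n : ℝ)⁻¹ * ∑ i, (φ i y + M / 6 * ‖y - w i‖ ^ 3) := hxplus y
    _ ≤ (n : ℝ)⁻¹ * ∑ i, (f i y + (M + H) / 6 * ‖y - w i‖ ^ 3) := step3
    _ = _ := hfin
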